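/- Let E = E_s ⊕ E_u be a Banach space over a valued field with a norm satisfying ‖x + y‖ = max{‖x‖, ‖y‖} for x ∈ E_s, y ∈ E_u, and let A : E → E be a linear homeomorphism preserving this splitting, with A₁ := A|_{E_s}, A₂ := A|_{E_u}. Let g = (g_s, g_u) and h = (h_s, h_u) be bounded Lipschitz maps E → E such that Lip(h) < ‖A⁻¹‖⁻¹ and Λ := max{‖A₂⁻¹‖(1 + Lip(g_u)), ‖A₁‖ + Lip(g_s)} < 1. Then there exists a unique bounded continuous map v : E → E such that (id + v) ∘ (A + h) = (A + g) ∘ (id + v), and it satisfies ‖v‖_∞ ≤ max{‖h_s‖_∞ + ‖g_s‖_∞, ‖A₂⁻¹‖(‖h_u‖_∞ + ‖g_u‖_∞)}/(1 − Λ). If moreover g(0) = h(0) = 0, then v(0) = 0. -/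

import Mathlib

set_option maxHeartbeats 1000000

open NNReal BoundedContinuousFunction

theorem conjugacy_between_perturbations
    {K Es Eu : Type*} [NontriviallyNormedField K]
    [NormedAddCommGroup Es] [NormedSpace K Es] [CompleteSpace Es]
    [NormedAddCommGroup Eu] [NormedSpace K Eu] [CompleteSpace Eu]
    (A₁ : Es ≃L[K] Es) (A₂ : Eu ≃L[K] Eu)
    (g h : Es × Eu → Es × Eu)
    (Lg Lh Lgs Lgu : ℝ≥0) (Mgs Mgu Mhs Mhu : ℝ)
    (hgL : LipschitzWith Lg g) (hhL : LipschitzWith Lh h)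
    (hgsL : LipschitzWith Lgs (fun x => (g x).1))
    (hguL : LipschitzWith Lgu (fun x => (g x).2))
    (hgsM : ∀ x, ‖(g x).1‖ ≤ Mgs) (hguM : ∀ x, ‖(g x).2‖ ≤ Mgu)
    (hhsM : ∀ x, ‖(h x).1‖ ≤ Mhs) (hhuM : ∀ x, ‖(h x).2‖ ≤ Mhu)
    (hLh : (Lh : ℝ) < ‖((A₁.prodCongr A₂).symm : (Es × Eu) →L[K] (Es × Eu))‖⁻¹)
    (hΛ : max (‖(A₂.symm : Eu →L[K] Eu)‖ * (1 + (Lgu : ℝ)))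
        (‖(A₁ : Es →L[K] Es)‖ + (Lgs : ℝ)) < 1) :
    ∃ v : Es × Eu → Es × Eu,
      (Continuous v ∧ (∃ M : ℝ, ∀ x, ‖v x‖ ≤ M) ∧
        ∀ x, (A₁.prodCongr A₂) x + h x + v ((A₁.prodCongr A₂) x + h x)
          = (A₁.prodCongr A₂) (x + v x) + g (x + v x)) ∧
      (∀ x, ‖v x‖ ≤
        max (Mhs + Mgs) (‖(A₂.symm : Eu →L[K] Eu)‖ * (Mhu + Mgu)) /
          (1 - max (‖(A₂.symm : Eu →L[K] Eu)‖ * (1 + (Lgu : ℝ)))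
            (‖(A₁ : Es →L[K] Es)‖ + (Lgs : ℝ)))) ∧
      (g 0 = 0 → h 0 = 0 → v 0 = 0) ∧
      (∀ v' : Es × Eu → Es × Eu,
        (Continuous v' ∧ (∃ M : ℝ, ∀ x, ‖v' x‖ ≤ M) ∧
          ∀ x, (A₁.prodCongr A₂) x + h x + v' ((A₁.prodCongr A₂) x + h x)
            = (A₁.prodCongr A₂) (x + v' x) + g (x + v' x)) → v' = v) := by
  classical
  set A := A₁.prodCongr A₂ with hA
  set Λ : ℝ := max (‖(A₂.symm : Eu →L[K] Eu)‖ * (1 + (Lgu : ℝ)))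
      (‖(A₁ : Es →L[K] Es)‖ + (Lgs : ℝ)) with hΛdef
  have hΛ0 : 0 ≤ Λ := le_trans (by positivity) (le_max_right _ _)
  have hΛ1 : Λ < 1 := hΛ
  -- the homeomorphism F = A + h
  have happrox : ApproximatesLinearOn (fun x => A x + h x)
      (A : (Es × Eu) →L[K] (Es × Eu)) Set.univ Lh := by
    intro x _ y _
    have e : (A x + h x) - (A y + h y) - (A : (Es × Eu) →L[K] (Es × Eu)) (x - y)
        = h x - h y := by simp [map_sub]; abel
    rw [e, ← dist_eq_norm, ← dist_eq_norm]
    exact hhL.dist_le_mul x y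
  have hN : Lh < ‖((A.symm : (Es × Eu) →L[K] (Es × Eu)))‖₊⁻¹ := by
    rw [← NNReal.coe_lt_coe]; push_cast; simpa using hLh
  let F : (Es × Eu) ≃ₜ (Es × Eu) := happrox.toHomeomorph _ (Or.inr hN)
  have hF : ∀ x, F x = A x + h x := fun x => rfl
  clear_value F
  have hgc : Continuous g := hgL.continuous
  have hhc : Continuous h := hhL.continuous
  -- the operator T on bounded continuous functions
  set Tf : ((Es × Eu) →ᵇ (Es × Eu)) → (Es × Eu) → (Es × Eu) := fun v p =>
      (A₁ ((v (F.symm p)).1) + (g (F.symm p + v (F.symm p))).1 - (h (F.symm p)).1,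
       A₂.symm ((v (F p)).2 + (h p).2 - (g (p + v p)).2)) with hTf
  have hTfc : ∀ v : (Es × Eu) →ᵇ (Es × Eu), Continuous (Tf v) := by
    intro v
    rw [hTf]
    have hv := v.continuous
    fun_prop
  have hTfb : ∀ (v : (Es × Eu) →ᵇ (Es × Eu)) (p : Es × Eu), ‖Tf v p‖ ≤
      max (‖(A₁ : Es →L[K] Es)‖ * ‖v‖ + (Mgs + Mhs))
        (‖(A₂.symm : Eu →L[K] Eu)‖ * (‖v‖ + (Mhu + Mgu))) := by
    intro v p
    rw [hTf, Prod.norm_def]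
    apply max_le_max
    · calc ‖A₁ ((v (F.symm p)).1) + (g (F.symm p + v (F.symm p))).1 - (h (F.symm p)).1‖
          ≤ ‖A₁ ((v (F.symm p)).1)‖ + ‖(g (F.symm p + v (F.symm p))).1‖ + ‖(h (F.symm p)).1‖ := by
            exact (norm_sub_le _ _).trans (by gcongr; exact norm_add_le _ _)
      _ ≤ ‖(A₁ : Es →L[K] Es)‖ * ‖v‖ + (Mgs + Mhs) := by
            have h1 : ‖A₁ ((v (F.symm p)).1)‖ ≤ ‖(A₁ : Es →L[K] Es)‖ * ‖v‖ := by
              refine le_trans ((A₁ : Es →L[K] Es).le_opNorm _) ?_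
              gcongr
              exact le_trans (norm_fst_le _) (v.norm_coe_le_norm _)
            have h2 := hgsM (F.symm p + v (F.symm p))
            have h3 := hhsM (F.symm p)
            linarith
    · calc ‖A₂.symm ((v (F p)).2 + (h p).2 - (g (p + v p)).2)‖
          ≤ ‖(A₂.symm : Eu →L[K] Eu)‖ * ‖(v (F p)).2 + (h p).2 - (g (p + v p)).2‖ :=
            (A₂.symm : Eu →L[K] Eu).le_opNorm _
      _ ≤ ‖(A₂.symm : Eu →L[K] Eu)‖ * (‖v‖ + (Mhu + Mgu)) := by
            gcongr
            calc ‖(v (F p)).2 + (h p).2 - (g (p + v p)).2‖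
                ≤ ‖(v (F p)).2‖ + ‖(h p).2‖ + ‖(g (p + v p)).2‖ :=
                  (norm_sub_le _ _).trans (by gcongr; exact norm_add_le _ _)
              _ ≤ ‖v‖ + (Mhu + Mgu) := by
                  have h1 : ‖(v (F p)).2‖ ≤ ‖v‖ :=
                    le_trans (norm_snd_le _) (v.norm_coe_le_norm _)
                  have h2 := hhuM p
                  have h3 := hguM (p + v p)
                  linarith
  set T : ((Es × Eu) →ᵇ (Es × Eu)) → ((Es × Eu) →ᵇ (Es × Eu)) := fun v =>
      BoundedContinuousFunction.ofNormedAddCommGroup (Tf v) (hTfc v) _ (hTfb v) with hT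
  have hTapp : ∀ (v : (Es × Eu) →ᵇ (Es × Eu)) (p : Es × Eu), T v p = Tf v p :=
    fun v p => rfl
  clear_value T
  -- pointwise contraction estimate
  have hdist : ∀ (v w : (Es × Eu) →ᵇ (Es × Eu)) (p : Es × Eu),
      dist (T v p) (T w p) ≤ Λ * dist v w := by
    intro v w p
    rw [hTapp, hTapp, Prod.dist_eq, hTf]
    have hvw : ∀ q : Es × Eu, dist (v q) (w q) ≤ dist v w :=
      fun q => BoundedContinuousFunction.dist_coe_le_dist q
    apply max_le
    · set z := F.symm p
      rw [dist_eq_norm]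
      have e : (A₁ ((v z).1) + (g (z + v z)).1 - (h z).1)
          - (A₁ ((w z).1) + (g (z + w z)).1 - (h z).1)
          = A₁ ((v z).1 - (w z).1) + ((g (z + v z)).1 - (g (z + w z)).1) := by
        rw [map_sub]; abel
      rw [e]
      calc ‖A₁ ((v z).1 - (w z).1) + ((g (z + v z)).1 - (g (z + w z)).1)‖
          ≤ ‖A₁ ((v z).1 - (w z).1)‖ + ‖(g (z + v z)).1 - (g (z + w z)).1‖ := norm_add_le _ _
        _ ≤ ‖(A₁ : Es →L[K] Es)‖ * dist v w + (Lgs : ℝ) * dist v w := by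
            gcongr
            · refine le_trans ((A₁ : Es →L[K] Es).le_opNorm _) ?_
              gcongr
              calc ‖(v z).1 - (w z).1‖ = ‖(v z - w z).1‖ := rfl
                _ ≤ ‖v z - w z‖ := norm_fst_le _
                _ = dist (v z) (w z) := (dist_eq_norm _ _).symm
                _ ≤ dist v w := hvw z
            · calc ‖(g (z + v z)).1 - (g (z + w z)).1‖
                  = dist (g (z + v z)).1 (g (z + w z)).1 := (dist_eq_norm _ _).symm
                _ ≤ (Lgs : ℝ) * dist (z + v z) (z + w z) := hgsL.dist_le_mul _ _
                _ = (Lgs : ℝ) * dist (v z) (w z) := by rw [dist_add_left]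
                _ ≤ (Lgs : ℝ) * dist v w := by gcongr; exact hvw z
        _ = (‖(A₁ : Es →L[K] Es)‖ + (Lgs : ℝ)) * dist v w := by ring
        _ ≤ Λ * dist v w := by gcongr; exact le_max_right _ _
    · rw [dist_eq_norm]
      have e : A₂.symm ((v (F p)).2 + (h p).2 - (g (p + v p)).2)
          - A₂.symm ((w (F p)).2 + (h p).2 - (g (p + w p)).2)
          = A₂.symm (((v (F p)).2 - (w (F p)).2) - ((g (p + v p)).2 - (g (p + w p)).2)) := by
        rw [← map_sub]; congr 1; abel
      rw [e]
      calc ‖A₂.symm (((v (F p)).2 - (w (F p)).2) - ((g (p + v p)).2 - (g (p + w p)).2))‖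
          ≤ ‖(A₂.symm : Eu →L[K] Eu)‖ *
            ‖((v (F p)).2 - (w (F p)).2) - ((g (p + v p)).2 - (g (p + w p)).2)‖ :=
            (A₂.symm : Eu →L[K] Eu).le_opNorm _
        _ ≤ ‖(A₂.symm : Eu →L[K] Eu)‖ * (dist v w + (Lgu : ℝ) * dist v w) := by
            gcongr
            calc ‖((v (F p)).2 - (w (F p)).2) - ((g (p + v p)).2 - (g (p + w p)).2)‖
                ≤ ‖(v (F p)).2 - (w (F p)).2‖ + ‖(g (p + v p)).2 - (g (p + w p)).2‖ :=
                  norm_sub_le _ _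
              _ ≤ dist v w + (Lgu : ℝ) * dist v w := by
                  gcongr
                  · calc ‖(v (F p)).2 - (w (F p)).2‖ = ‖(v (F p) - w (F p)).2‖ := rfl
                      _ ≤ ‖v (F p) - w (F p)‖ := norm_snd_le _
                      _ = dist (v (F p)) (w (F p)) := (dist_eq_norm _ _).symm
                      _ ≤ dist v w := hvw _
                  · calc ‖(g (p + v p)).2 - (g (p + w p)).2‖
                        = dist (g (p + v p)).2 (g (p + w p)).2 := (dist_eq_norm _ _).symm
                      _ ≤ (Lgu : ℝ) * dist (p + v p) (p + w p) := hguL.dist_le_mul _ _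
                      _ = (Lgu : ℝ) * dist (v p) (w p) := by rw [dist_add_left]
                      _ ≤ (Lgu : ℝ) * dist v w := by gcongr; exact hvw p
        _ = (‖(A₂.symm : Eu →L[K] Eu)‖ * (1 + (Lgu : ℝ))) * dist v w := by ring
        _ ≤ Λ * dist v w := by gcongr; exact le_max_left _ _
  -- contraction
  set ΛN : ℝ≥0 := max (‖(A₂.symm : Eu →L[K] Eu)‖₊ * (1 + Lgu)) (‖(A₁ : Es →L[K] Es)‖₊ + Lgs)
    with hΛN
  have hΛNcoe : (ΛN : ℝ) = Λ := by rw [hΛN, hΛdef]; push_cast; rfl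
  have hcontr : ContractingWith ΛN T := by
    constructor
    · rw [← NNReal.coe_lt_one, hΛNcoe]; exact hΛ1
    · apply LipschitzWith.of_dist_le_mul
      intro v w
      rw [BoundedContinuousFunction.dist_le (by positivity)]
      intro p
      rw [hΛNcoe]
      exact hdist v w p
  set v₀ : (Es × Eu) →ᵇ (Es × Eu) := ContractingWith.fixedPoint T hcontr with hv₀
  have hfix : T v₀ = v₀ := hcontr.fixedPoint_isFixedPt
  clear_value v₀
  have heq : ∀ p, Tf v₀ p = v₀ p := by
    intro p; rw [← hTapp, hfix]
  have heq_s : ∀ p, (v₀ p).1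
      = A₁ ((v₀ (F.symm p)).1) + (g (F.symm p + v₀ (F.symm p))).1 - (h (F.symm p)).1 := by
    intro p
    conv_lhs => rw [← heq p]
  have heq_u : ∀ p, (v₀ p).2
      = A₂.symm ((v₀ (F p)).2 + (h p).2 - (g (p + v₀ p)).2) := by
    intro p
    conv_lhs => rw [← heq p]
  -- the conjugacy equation for arbitrary fixed points / arbitrary solutions
  have conj_of_fix : ∀ x : Es × Eu,
      A x + h x + v₀ (A x + h x) = A (x + v₀ x) + g (x + v₀ x) := by
    intro x
    have hs := heq_s (F x)
    rw [F.symm_apply_apply] at hs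
    rw [hF x] at hs
    have hu := heq_u x
    have hu' : A₂ ((v₀ x).2) = (v₀ (A x + h x)).2 + (h x).2 - (g (x + v₀ x)).2 := by
      rw [hu, A₂.apply_symm_apply, hF x]
    have hu'' : (v₀ (A x + h x)).2 = A₂ ((v₀ x).2) + (g (x + v₀ x)).2 - (h x).2 := by
      rw [hu']; abel
    apply Prod.ext
    · have hAx : (A x).1 = A₁ x.1 := rfl
      have hAxv : (A (x + v₀ x)).1 = A₁ x.1 + A₁ ((v₀ x).1) := by
        show A₁ (x + v₀ x).1 = _
        rw [Prod.fst_add, map_add]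
      simp only [Prod.fst_add, hs, hAx, hAxv]
      abel
    · have hAx : (A x).2 = A₂ x.2 := rfl
      have hAxv : (A (x + v₀ x)).2 = A₂ x.2 + A₂ ((v₀ x).2) := by
        show A₂ (x + v₀ x).2 = _
        rw [Prod.snd_add, map_add]
      simp only [Prod.snd_add, hu'', hAx, hAxv]
      abel
  -- norm bound
  have hMgs0 : 0 ≤ Mgs := le_trans (norm_nonneg _) (hgsM 0)
  have hMgu0 : 0 ≤ Mgu := le_trans (norm_nonneg _) (hguM 0)
  have hMhs0 : 0 ≤ Mhs := le_trans (norm_nonneg _) (hhsM 0)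
  have hMhu0 : 0 ≤ Mhu := le_trans (norm_nonneg _) (hhuM 0)
  set C : ℝ := max (Mhs + Mgs) (‖(A₂.symm : Eu →L[K] Eu)‖ * (Mhu + Mgu)) with hC
  have hC0 : 0 ≤ C := le_trans (by positivity) (le_max_left _ _)
  have hT0 : ‖T 0‖ ≤ C := by
    rw [BoundedContinuousFunction.norm_le hC0]
    intro p
    rw [hTapp, hTf]
    simp only [BoundedContinuousFunction.coe_zero, Pi.zero_apply, Prod.fst_zero, Prod.snd_zero,
      map_zero, zero_add, add_zero, zero_sub, zero_add]
    rw [Prod.norm_def]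
    apply max_le
    · refine le_trans (le_trans (norm_sub_le _ _) ?_) (le_max_left _ _)
      have := hgsM (F.symm p)
      have := hhsM (F.symm p)
      linarith
    · refine le_trans ?_ (le_max_right _ _)
      calc ‖A₂.symm ((h p).2 - (g p).2)‖
          ≤ ‖(A₂.symm : Eu →L[K] Eu)‖ * ‖(h p).2 - (g p).2‖ :=
            (A₂.symm : Eu →L[K] Eu).le_opNorm _
        _ ≤ ‖(A₂.symm : Eu →L[K] Eu)‖ * (Mhu + Mgu) := by
            gcongr
            refine le_trans (norm_sub_le _ _) ?_
            have := hhuM p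
            have := hguM p
            linarith
  have hnorm : ∀ p, ‖v₀ p‖ ≤ C / (1 - Λ) := by
    intro p
    have h1 : dist (0 : (Es × Eu) →ᵇ (Es × Eu)) v₀ ≤ dist (0 : (Es × Eu) →ᵇ (Es × Eu)) (T 0) / (1 - ΛN) := by
      rw [hv₀]; exact hcontr.dist_fixedPoint_le 0
    have h2 : dist (0 : (Es × Eu) →ᵇ (Es × Eu)) (T 0) = ‖T 0‖ := by
      rw [dist_comm, dist_zero_right]
    have h3 : ‖v₀‖ = dist (0 : (Es × Eu) →ᵇ (Es × Eu)) v₀ := by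
      rw [dist_comm, dist_zero_right]
    have h4 : ‖v₀ p‖ ≤ ‖v₀‖ := v₀.norm_coe_le_norm p
    rw [h2, hΛNcoe] at h1
    have h5 : ‖T 0‖ / (1 - Λ) ≤ C / (1 - Λ) := by
      gcongr
    linarith
  -- v 0 = 0
  have hzero : g 0 = 0 → h 0 = 0 → v₀ 0 = 0 := by
    intro hg0 hh0
    have hF0 : F 0 = 0 := by rw [hF 0, hh0]; simp
    have hFs0 : F.symm 0 = (0 : Es × Eu) := by
      apply F.injective
      rw [F.apply_symm_apply, hF0]
    have es := heq_s 0
    rw [hFs0, zero_add, hh0] at es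
    have eu := heq_u 0
    rw [hF0, hh0, zero_add] at eu
    simp only [Prod.fst_zero, Prod.snd_zero, sub_zero, add_zero] at es eu
    -- now ‖v₀ 0‖ ≤ Λ ‖v₀ 0‖
    have hb1 : ‖(v₀ 0).1‖ ≤ Λ * ‖v₀ 0‖ := by
      rw [es]
      calc ‖A₁ ((v₀ 0).1) + (g (v₀ 0)).1‖
          ≤ ‖A₁ ((v₀ 0).1)‖ + ‖(g (v₀ 0)).1‖ := norm_add_le _ _
        _ ≤ ‖(A₁ : Es →L[K] Es)‖ * ‖v₀ 0‖ + (Lgs : ℝ) * ‖v₀ 0‖ := by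
            gcongr
            · exact le_trans ((A₁ : Es →L[K] Es).le_opNorm _) (by gcongr; exact norm_fst_le _)
            · have := hgsL.dist_le_mul (v₀ 0) 0
              rw [dist_eq_norm, dist_eq_norm] at this
              simpa [hg0] using this
        _ = (‖(A₁ : Es →L[K] Es)‖ + (Lgs : ℝ)) * ‖v₀ 0‖ := by ring
        _ ≤ Λ * ‖v₀ 0‖ := by gcongr; exact le_max_right _ _
    have hb2 : ‖(v₀ 0).2‖ ≤ Λ * ‖v₀ 0‖ := by
      rw [eu]
      calc ‖A₂.symm ((v₀ 0).2 - (g (v₀ 0)).2)‖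
          ≤ ‖(A₂.symm : Eu →L[K] Eu)‖ * ‖(v₀ 0).2 - (g (v₀ 0)).2‖ :=
            (A₂.symm : Eu →L[K] Eu).le_opNorm _
        _ ≤ ‖(A₂.symm : Eu →L[K] Eu)‖ * ((1 + (Lgu : ℝ)) * ‖v₀ 0‖) := by
            gcongr
            calc ‖(v₀ 0).2 - (g (v₀ 0)).2‖ ≤ ‖(v₀ 0).2‖ + ‖(g (v₀ 0)).2‖ := norm_sub_le _ _
              _ ≤ ‖v₀ 0‖ + (Lgu : ℝ) * ‖v₀ 0‖ := by
                  gcongr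
                  · exact norm_snd_le _
                  · have := hguL.dist_le_mul (v₀ 0) 0
                    rw [dist_eq_norm, dist_eq_norm] at this
                    simpa [hg0] using this
              _ = (1 + (Lgu : ℝ)) * ‖v₀ 0‖ := by ring
        _ = (‖(A₂.symm : Eu →L[K] Eu)‖ * (1 + (Lgu : ℝ))) * ‖v₀ 0‖ := by ring
        _ ≤ Λ * ‖v₀ 0‖ := by gcongr; exact le_max_left _ _
    have hle : ‖v₀ 0‖ ≤ Λ * ‖v₀ 0‖ := by
      rw [Prod.norm_def]; exact max_le hb1 hb2
    have : ‖v₀ 0‖ = 0 := by nlinarith [norm_nonneg (v₀ 0)]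
    exact norm_eq_zero.mp this
  -- uniqueness
  have huniq : ∀ v' : Es × Eu → Es × Eu,
      (Continuous v' ∧ (∃ M : ℝ, ∀ x, ‖v' x‖ ≤ M) ∧
        ∀ x, A x + h x + v' (A x + h x) = A (x + v' x) + g (x + v' x)) → v' = ⇑v₀ := by
    rintro v' ⟨hc', ⟨M, hM⟩, heq'⟩
    set w : (Es × Eu) →ᵇ (Es × Eu) :=
      BoundedContinuousFunction.ofNormedAddCommGroup v' hc' M hM with hw
    have hwapp : ∀ p, w p = v' p := fun p => rfl
    -- rewrite the equation: v'(F x) = A (v' x) + g (x + v' x) - h x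
    have key : ∀ x, v' (F x) = A (v' x) + g (x + v' x) - h x := by
      intro x
      have := heq' x
      rw [hF]
      rw [map_add] at this
      have : v' (A x + h x) = A x + A (v' x) + g (x + v' x) - (A x + h x) := by
        rw [← this]; abel
      rw [this]; abel
    have hwfix : T w = w := by
      ext p
      · rw [hTapp, hTf]
        simp only [hwapp]
        have hk := key (F.symm p)
        rw [F.apply_symm_apply] at hk
        rw [hk]
        simp only [Prod.fst_sub, Prod.fst_add]
        have e2 : (A (v' (F.symm p))).1 = A₁ ((v' (F.symm p)).1) := rfl
        rw [e2]
      · rw [hTapp, hTf]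
        simp only [hwapp]
        have hk := key p
        have : (v' (F p)).2 + (h p).2 - (g (p + v' p)).2 = A₂ ((v' p).2) := by
          rw [hk]
          have : (A (v' p)).2 = A₂ ((v' p).2) := rfl
          simp only [Prod.snd_sub, Prod.snd_add, this]
          abel
        rw [this, A₂.symm_apply_apply]
    have : w = v₀ := (hcontr.fixedPoint_unique hwfix).trans hv₀.symm
    funext p
    rw [← hwapp p, this]
  refine ⟨⇑v₀, ⟨v₀.continuous, ⟨‖v₀‖, fun p => v₀.norm_coe_le_norm p⟩, conj_of_fix⟩,
    hnorm, hzero, huniq⟩
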